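/- For every t > 0 and all x, y ∈ [0, L], the Neumann heat kernel dominates the Gaussian heat kernel: p_N(t,x,y) ≥ p(t,x,y). -/

import Mathlib

open MeasureTheory Real

/-- The Gaussian heat kernel on ℝ. -/
noncomputable def gaussKernel (t x y : ℝ) : ℝ :=
  (2 * Real.pi * t) ^ (-(1:ℝ)/2) * Real.exp (-(x - y)^2 / (2*t))

/-- The Neumann heat kernel on `[0,L]`. -/
noncomputable def neumannKernel (L t x y : ℝ) : ℝ :=
  1 / L + (2 / L) * ∑' n : ℕ,
    Real.exp (-((n:ℝ)+1)^2 * Real.pi^2 * t / (2*L^2)) *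
      Real.cos (((n:ℝ)+1) * Real.pi * x / L) * Real.cos (((n:ℝ)+1) * Real.pi * y / L)

open Filter

lemma summable_gauss_shift {k c : ℝ} (hk : 0 < k) :
    Summable (fun n : ℕ => rexp (-(k * ((n:ℝ) + c)^2))) := by
  apply summable_of_ratio_norm_eventually_le (r := 1/2) (by norm_num)
  have h1 : Tendsto (fun n : ℕ => ((n:ℝ) + c)) atTop atTop :=
    tendsto_atTop_add_const_right atTop c tendsto_natCast_atTop_atTop
  have h2 : Tendsto (fun n : ℕ => k * (2*((n:ℝ)+c)+1)) atTop atTop := by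
    apply Tendsto.const_mul_atTop hk
    exact tendsto_atTop_add_const_right atTop 1 (h1.const_mul_atTop two_pos)
  have h3 : Tendsto (fun n : ℕ => rexp (-(k * (2*((n:ℝ)+c)+1)))) atTop (nhds 0) :=
    Real.tendsto_exp_atBot.comp (tendsto_neg_atBot_iff.mpr h2)
  filter_upwards [h3.eventually_le_const (by norm_num : (0:ℝ) < 1/2)] with n hn
  have key : rexp (-(k * (((n:ℕ):ℝ) + 1 + c)^2))
      = rexp (-(k * (2*((n:ℝ)+c)+1))) * rexp (-(k * ((n:ℝ)+c)^2)) := by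
    rw [← Real.exp_add]; ring_nf
  rw [Real.norm_eq_abs, Real.norm_eq_abs, abs_of_pos (Real.exp_pos _),
    abs_of_pos (Real.exp_pos _)]
  push_cast
  rw [key]
  exact mul_le_mul_of_nonneg_right hn (Real.exp_pos _).le

lemma summable_gauss_shift_int {k c : ℝ} (hk : 0 < k) :
    Summable (fun n : ℤ => rexp (-(k * ((n:ℝ) + c)^2))) := by
  apply Summable.of_nat_of_neg
  · exact (summable_gauss_shift (c := c) hk).congr fun n => by norm_num
  · refine ((summable_gauss_shift (c := -c) hk).congr fun n => ?_)
    push_cast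
    ring_nf

lemma real_poisson {a : ℝ} (ha : 0 < a) (c : ℝ) :
    ∑' n : ℤ, rexp (-(π * a * (n:ℝ)^2)) * Real.cos (2*π*c*(n:ℝ))
      = (1 / a ^ ((1:ℝ)/2)) * ∑' n : ℤ, rexp (-(π/a * ((n:ℝ)+c)^2)) := by
  have key := Complex.tsum_exp_neg_quadratic (a := (a:ℂ)) (by simpa using ha)
    (-(Complex.I * (c:ℝ)))
  have hterm : ∀ n : ℤ, (-(π:ℂ) * (a:ℂ) * (n:ℂ)^2 + 2*(π:ℂ)*(-(Complex.I*(c:ℝ)))*(n:ℂ))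
      = Complex.ofReal (-(π*a*(n:ℝ)^2)) + Complex.ofReal (-(2*π*c*(n:ℝ))) * Complex.I := by
    intro n; push_cast; ring
  have hsum : Summable (fun n : ℤ => Complex.exp
      (-(π:ℂ) * (a:ℂ) * (n:ℂ)^2 + 2*(π:ℂ)*(-(Complex.I*(c:ℝ)))*(n:ℂ))) := by
    apply Summable.of_norm
    refine (summable_gauss_shift_int (k := π * a) (c := 0)
      (mul_pos Real.pi_pos ha)).congr fun n => ?_
    have hre : (Complex.ofReal (-(π*a*(n:ℝ)^2)) + Complex.ofReal (-(2*π*c*(n:ℝ))) * Complex.I).re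
        = -(π*a*(n:ℝ)^2) := by
      rw [Complex.add_re, Complex.ofReal_re, Complex.mul_I_re, Complex.ofReal_im, neg_zero, add_zero]
    rw [hterm n, Complex.norm_exp, hre]
    norm_num
  have lhs_eq : (∑' n : ℤ, Complex.exp
      (-(π:ℂ) * (a:ℂ) * (n:ℂ)^2 + 2*(π:ℂ)*(-(Complex.I*(c:ℝ)))*(n:ℂ))).re
      = ∑' n : ℤ, rexp (-(π * a * (n:ℝ)^2)) * Real.cos (2*π*c*(n:ℝ)) := by
    rw [show (∑' n : ℤ, Complex.exp
        (-(π:ℂ) * (a:ℂ) * (n:ℂ)^2 + 2*(π:ℂ)*(-(Complex.I*(c:ℝ)))*(n:ℂ))).re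
        = RCLike.re (∑' n : ℤ, Complex.exp
        (-(π:ℂ) * (a:ℂ) * (n:ℂ)^2 + 2*(π:ℂ)*(-(Complex.I*(c:ℝ)))*(n:ℂ))) from rfl,
      RCLike.re_tsum _ hsum]
    refine tsum_congr fun n => ?_
    rw [show ∀ z : ℂ, RCLike.re z = z.re from fun _ => rfl, hterm n, Complex.exp_re]
    have h1 : ((-(π*a*(n:ℝ)^2) : ℝ) + ((-(2*π*c*(n:ℝ)) : ℝ) : ℂ) * Complex.I).re
        = -(π*a*(n:ℝ)^2) := by
      rw [Complex.add_re, Complex.ofReal_re, Complex.mul_I_re, Complex.ofReal_im, neg_zero,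
        add_zero]
    have h2 : ((-(π*a*(n:ℝ)^2) : ℝ) + ((-(2*π*c*(n:ℝ)) : ℝ) : ℂ) * Complex.I).im
        = -(2*π*c*(n:ℝ)) := by
      rw [Complex.add_im, Complex.ofReal_im, Complex.mul_I_im, Complex.ofReal_re, zero_add]
    rw [h1, h2, Real.cos_neg]
  have hI : Complex.I * -(Complex.I * (c:ℂ)) = (c:ℂ) := by
    rw [mul_neg, ← mul_assoc, Complex.I_mul_I]; ring
  have h2 : ∀ n : ℤ, Complex.exp (-(π:ℂ)/(a:ℂ) * ((n:ℂ) + Complex.I * -(Complex.I * (c:ℝ)))^2)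
      = Complex.ofReal (rexp (-(π/a*((n:ℝ)+c)^2))) := by
    intro n
    rw [hI, Complex.ofReal_exp]
    congr 1
    push_cast
    ring
  rw [tsum_congr h2, ← Complex.ofReal_tsum] at key
  have hcpow : ((a:ℂ) ^ (1/2 : ℂ)) = ((a ^ ((1:ℝ)/2) : ℝ) : ℂ) := by
    rw [Complex.ofReal_cpow ha.le]; norm_num
  rw [hcpow] at key
  rw [← lhs_eq, key]
  rw [show (1:ℂ) / ((a ^ ((1:ℝ)/2) : ℝ) : ℂ) * ((∑' n : ℤ, rexp (-(π/a*((n:ℝ)+c)^2)) : ℝ) : ℂ)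
      = (((1 / a ^ ((1:ℝ)/2) * ∑' n : ℤ, rexp (-(π/a*((n:ℝ)+c)^2)) : ℝ)) : ℂ) by push_cast; ring,
    Complex.ofReal_re]

set_option maxHeartbeats 1000000 in
lemma cos_sum_int_eq {k : ℝ} (d : ℝ) (hk : 0 < k) :
    ∑' n : ℤ, rexp (-(k * (n:ℝ)^2)) * Real.cos (d * (n:ℝ))
      = 1 + 2 * ∑' n : ℕ, rexp (-(k * ((n:ℝ)+1)^2)) * Real.cos (d * ((n:ℝ)+1)) := by
  have base : Summable (fun n : ℤ => rexp (-(k * (n:ℝ)^2))) :=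
    (summable_gauss_shift_int (c := 0) hk).congr (fun n => by norm_num)
  have hfZ : Summable (fun n : ℤ => rexp (-(k * (n:ℝ)^2)) * Real.cos (d * (n:ℝ))) := by
    apply Summable.of_abs
    refine Summable.of_nonneg_of_le (fun n => abs_nonneg _) (fun n => ?_) base
    rw [abs_mul, abs_of_pos (Real.exp_pos _)]
    calc rexp (-(k * (n:ℝ)^2)) * |Real.cos (d * (n:ℝ))|
        ≤ rexp (-(k * (n:ℝ)^2)) * 1 :=
          mul_le_mul_of_nonneg_left (Real.abs_cos_le_one _) (Real.exp_pos _).le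
      _ = _ := mul_one _
  have hneg : Function.Injective (fun n : ℕ => (-((n:ℤ)+1) : ℤ)) := fun a b h => by
    simp only [neg_inj, add_left_inj, Nat.cast_inj] at h; exact h
  have h1 := hfZ.comp_injective (Nat.cast_injective : Function.Injective ((↑) : ℕ → ℤ))
  have h2 := hfZ.comp_injective hneg
  rw [tsum_of_nat_of_neg_add_one (f := fun n : ℤ => rexp (-(k * (n:ℝ)^2)) * Real.cos (d * (n:ℝ))) h1 h2]
  have e2 : ∀ n : ℕ, rexp (-(k * (((-(n+1):ℤ)):ℝ)^2)) * Real.cos (d * (((-(n+1):ℤ)):ℝ))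
      = rexp (-(k * ((n:ℝ)+1)^2)) * Real.cos (d * ((n:ℝ)+1)) := by
    intro n
    push_cast
    rw [show -(k * (-((n:ℝ)+1))^2) = -(k * ((n:ℝ)+1)^2) by ring,
      show d * -((n:ℝ)+1) = -(d * ((n:ℝ)+1)) by ring, Real.cos_neg]
  rw [tsum_congr e2, Summable.tsum_eq_zero_add (f := fun n : ℕ => rexp (-(k * ((n:ℤ):ℝ)^2)) * Real.cos (d * ((n:ℤ):ℝ))) h1]
  have e1 : ∀ n : ℕ, rexp (-(k * (((n+1:ℕ):ℤ):ℝ)^2)) * Real.cos (d * (((n+1:ℕ):ℤ):ℝ))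
      = rexp (-(k * ((n:ℝ)+1)^2)) * Real.cos (d * ((n:ℝ)+1)) := by
    intro n; push_cast; ring_nf
  rw [tsum_congr e1]
  norm_num
  ring
lemma const_eq {L t : ℝ} (hL : 0 < L) (ht : 0 < t) :
    (2*π*t) ^ (-(1:ℝ)/2) * (π*t/(2*L^2)) ^ ((1:ℝ)/2) = 1/(2*L) := by
  have h2πt : (0:ℝ) < 2*π*t := by positivity
  have hπ := Real.pi_ne_zero
  have ht' := ht.ne'
  have hL' := hL.ne'
  rw [show (-(1:ℝ)/2) = -((1:ℝ)/2) by norm_num, Real.rpow_neg h2πt.le,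
    ← Real.sqrt_eq_rpow, ← Real.sqrt_eq_rpow, ← Real.sqrt_inv,
    ← Real.sqrt_mul (inv_nonneg.mpr h2πt.le),
    show (2*π*t)⁻¹ * (π*t/(2*L^2)) = (1/(2*L))^2 by field_simp]
  exact Real.sqrt_sq (by positivity)

lemma theta_eq {L t : ℝ} (hL : 0 < L) (ht : 0 < t) (u : ℝ) :
    ∑' n : ℤ, gaussKernel t (u + 2*(n:ℝ)*L) 0
      = 1/(2*L) * (1 + 2 * ∑' n : ℕ,
          rexp (-((n:ℝ)+1)^2 * π^2 * t / (2*L^2)) * Real.cos (((n:ℝ)+1) * π * u / L)) := by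
  have ha : 0 < π * t / (2*L^2) := by positivity
  have hπ := Real.pi_ne_zero
  have ht' := ht.ne'
  have hL' := hL.ne'
  have key := real_poisson ha (u/(2*L))
  have hgauss : ∀ n : ℤ, gaussKernel t (u + 2*(n:ℝ)*L) 0
      = (2*π*t) ^ (-(1:ℝ)/2) * rexp (-(π/(π*t/(2*L^2)) * ((n:ℝ) + u/(2*L))^2)) := by
    intro n
    unfold gaussKernel
    congr 1
    rw [show -(u + 2*(n:ℝ)*L - 0)^2 / (2*t) = -(π/(π*t/(2*L^2)) * ((n:ℝ) + u/(2*L))^2) by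
      field_simp; ring]
  rw [tsum_congr hgauss, tsum_mul_left]
  have key' : ∑' n : ℤ, rexp (-(π/(π*t/(2*L^2)) * ((n:ℝ) + u/(2*L))^2))
      = (π*t/(2*L^2)) ^ ((1:ℝ)/2) * ∑' n : ℤ,
          rexp (-(π * (π*t/(2*L^2)) * (n:ℝ)^2)) * Real.cos (2*π*(u/(2*L))*(n:ℝ)) := by
    rw [key, ← mul_assoc, mul_one_div, div_self (Real.rpow_pos_of_pos ha _).ne', one_mul]
  rw [key', ← mul_assoc, const_eq hL ht,
    cos_sum_int_eq (2*π*(u/(2*L))) (by positivity : (0:ℝ) < π * (π*t/(2*L^2)))]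
  congr 3
  refine tsum_congr fun n => ?_
  rw [show -(π * (π*t/(2*L^2)) * ((n:ℝ)+1)^2) = -((n:ℝ)+1)^2 * π^2 * t / (2*L^2) by ring,
    show 2*π*(u/(2*L))*((n:ℝ)+1) = ((n:ℝ)+1) * π * u / L by field_simp]

lemma summable_theta {L t : ℝ} (hL : 0 < L) (ht : 0 < t) (u : ℝ) :
    Summable (fun n : ℤ => gaussKernel t (u + 2*(n:ℝ)*L) 0) := by
  have hk : (0:ℝ) < 2*L^2/t := by positivity
  refine (((summable_gauss_shift_int (k := 2*L^2/t) (c := u/(2*L)) hk).mul_left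
    ((2*π*t) ^ (-(1:ℝ)/2))).congr fun n => ?_)
  unfold gaussKernel
  congr 1
  rw [show -(2*L^2/t * ((n:ℝ) + u/(2*L))^2) = -(u + 2*(n:ℝ)*L - 0)^2 / (2*t) by
    field_simp; ring]

lemma gauss_nonneg {t : ℝ} (ht : 0 < t) (x y : ℝ) : 0 ≤ gaussKernel t x y := by
  unfold gaussKernel; positivity

lemma summable_coscos {L t : ℝ} (hL : 0 < L) (ht : 0 < t) (f : ℕ → ℝ)
    (hf : ∀ n : ℕ, |f n| ≤ 1) :
    Summable (fun n : ℕ => rexp (-((n:ℝ)+1)^2 * π^2 * t / (2*L^2)) * f n) := by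
  have hk : (0:ℝ) < π^2 * t / (2*L^2) := by positivity
  apply Summable.of_abs
  refine Summable.of_nonneg_of_le (fun n => abs_nonneg _) (fun n => ?_)
    ((summable_gauss_shift (k := π^2 * t / (2*L^2)) (c := 1) hk).congr fun n => by
      rw [show -(π^2 * t / (2*L^2) * ((n:ℝ)+1)^2) = -((n:ℝ)+1)^2 * π^2 * t / (2*L^2) by ring])
  rw [abs_mul, abs_of_pos (Real.exp_pos _)]
  calc rexp (-((n:ℝ)+1)^2 * π^2 * t / (2*L^2)) * |f n|
      ≤ rexp (-((n:ℝ)+1)^2 * π^2 * t / (2*L^2)) * 1 :=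
        mul_le_mul_of_nonneg_left (hf n) (Real.exp_pos _).le
    _ = _ := mul_one _

/-- For every `t > 0` and `x, y ∈ [0,L]`, the Neumann heat kernel dominates the Gaussian
heat kernel. -/
theorem gaussKernel_le_neumannKernel (L : ℝ) (hL : 0 < L) (t x y : ℝ) (ht : 0 < t)
    (hx : x ∈ Set.Icc (0:ℝ) L) (hy : y ∈ Set.Icc (0:ℝ) L) :
    gaussKernel t x y ≤ neumannKernel L t x y := by
  have hL' := hL.ne'
  have hneu : neumannKernel L t x y
      = (∑' n : ℤ, gaussKernel t (x - y + 2*(n:ℝ)*L) 0)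
        + ∑' n : ℤ, gaussKernel t (x + y + 2*(n:ℝ)*L) 0 := by
    rw [theta_eq hL ht (x - y), theta_eq hL ht (x + y)]
    unfold neumannKernel
    have h1 : Summable (fun n : ℕ => rexp (-((n:ℝ)+1)^2 * π^2 * t / (2*L^2)) *
        Real.cos (((n:ℝ)+1) * π * (x-y) / L)) :=
      summable_coscos hL ht _ (fun n => Real.abs_cos_le_one _)
    have h2 : Summable (fun n : ℕ => rexp (-((n:ℝ)+1)^2 * π^2 * t / (2*L^2)) *
        Real.cos (((n:ℝ)+1) * π * (x+y) / L)) :=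
      summable_coscos hL ht _ (fun n => Real.abs_cos_le_one _)
    have hsplit : ∀ n : ℕ,
        rexp (-((n:ℝ)+1)^2 * π^2 * t / (2*L^2)) * Real.cos (((n:ℝ)+1) * π * (x-y) / L)
        + rexp (-((n:ℝ)+1)^2 * π^2 * t / (2*L^2)) * Real.cos (((n:ℝ)+1) * π * (x+y) / L)
        = 2 * (rexp (-((n:ℝ)+1)^2 * π^2 * t / (2*L^2)) *
            Real.cos (((n:ℝ)+1) * π * x / L) * Real.cos (((n:ℝ)+1) * π * y / L)) := by
      intro n
      have hA : ((n:ℝ)+1) * π * (x-y) / L = ((n:ℝ)+1)*π*x/L - ((n:ℝ)+1)*π*y/L := by ring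
      have hB : ((n:ℝ)+1) * π * (x+y) / L = ((n:ℝ)+1)*π*x/L + ((n:ℝ)+1)*π*y/L := by ring
      rw [hA, hB, Real.cos_sub, Real.cos_add]
      ring
    have this2 : 2 * ∑' n : ℕ, rexp (-((n:ℝ)+1)^2 * π^2 * t / (2*L^2)) *
          Real.cos (((n:ℝ)+1) * π * x / L) * Real.cos (((n:ℝ)+1) * π * y / L)
        = (∑' n : ℕ, rexp (-((n:ℝ)+1)^2 * π^2 * t / (2*L^2)) *
            Real.cos (((n:ℝ)+1) * π * (x-y) / L))
          + ∑' n : ℕ, rexp (-((n:ℝ)+1)^2 * π^2 * t / (2*L^2)) *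
            Real.cos (((n:ℝ)+1) * π * (x+y) / L) := by
      rw [← tsum_mul_left, tsum_congr (fun n => (hsplit n).symm)]
      exact Summable.tsum_add h1 h2
    linear_combination (1/L) * this2
  have h0 : gaussKernel t x y = gaussKernel t (x - y + 2*((0:ℤ):ℝ)*L) 0 := by
    unfold gaussKernel
    norm_num
  calc gaussKernel t x y = gaussKernel t (x - y + 2*((0:ℤ):ℝ)*L) 0 := h0
    _ ≤ ∑' n : ℤ, gaussKernel t (x - y + 2*(n:ℝ)*L) 0 :=
        Summable.le_tsum (summable_theta hL ht (x - y)) 0 (fun n _ => gauss_nonneg ht _ _)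
    _ ≤ (∑' n : ℤ, gaussKernel t (x - y + 2*(n:ℝ)*L) 0)
        + ∑' n : ℤ, gaussKernel t (x + y + 2*(n:ℝ)*L) 0 :=
        le_add_of_nonneg_right (tsum_nonneg fun n => gauss_nonneg ht _ _)
    _ = neumannKernel L t x y := hneu.symm
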